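/- For n ≥ 1, x·det((C(2i+1, i-j)·x² + C(2i+3, i+1-j))_{i,j=0}^{n-1}) = L_{2n+1}(x). -/

import Mathlib

/-- Generalized binomial coefficient `C(a,b)` for integer `a`, with `C(a,b) = 0` for `b < 0`. -/
noncomputable def gchoose (a b : ℤ) : ℤ :=
  if 0 ≤ b then Ring.choose a b.toNat else 0

/-- Fibonacci polynomials `F_m(x) = ∑_{k=0}^{⌊m/2⌋} C(m-k,k) x^{m-2k}`. -/
noncomputable def fibP (m : ℕ) (x : ℝ) : ℝ :=
  ∑ k ∈ Finset.range (m / 2 + 1), (Nat.choose (m - k) k : ℝ) * x ^ (m - 2 * k)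

/-- Lucas polynomials `L_m(x) = ∑_{k=0}^{⌊m/2⌋} (m/(m-k)) C(m-k,k) x^{m-2k}`, `L_0 = 2`. -/
noncomputable def lucasP (m : ℕ) (x : ℝ) : ℝ :=
  if m = 0 then 2
  else ∑ k ∈ Finset.range (m / 2 + 1),
    ((m : ℝ) / ((m - k : ℕ) : ℝ)) * (Nat.choose (m - k) k : ℝ) * x ^ (m - 2 * k)

lemma gchoose_neg {a b : ℤ} (h : b < 0) : gchoose a b = 0 := by
  simp [gchoose, not_le.mpr h]

lemma gchoose_natCast (m : ℕ) (b : ℤ) (hb : 0 ≤ b) :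
    gchoose (m : ℤ) b = (m.choose b.toNat : ℤ) := by
  simp [gchoose, hb, Ring.choose_natCast]

lemma gchoose_pascal (a b : ℤ) :
    gchoose (a + 1) (b + 1) = gchoose a b + gchoose a (b + 1) := by
  rcases lt_trichotomy b (-1) with h | h | h
  · rw [gchoose_neg (by omega), gchoose_neg (by omega), gchoose_neg (by omega)]; ring
  · subst_eqs
    simp only [gchoose, show (-1 : ℤ) + 1 = 0 by ring]
    norm_num [Ring.choose_zero_right]
  · have hb : 0 ≤ b := by omega
    have hb1 : 0 ≤ b + 1 := by omega
    simp only [gchoose, if_pos hb, if_pos hb1]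
    have h1 : (b+1).toNat = b.toNat + 1 := by omega
    rw [h1, Ring.choose_succ_succ]

lemma gchoose_double_pascal (a b : ℤ) :
    gchoose (a + 2) (b + 1) = gchoose a (b - 1) + 2 * gchoose a b + gchoose a (b + 1) := by
  have h1 : gchoose (a + 2) (b + 1) = gchoose (a+1) b + gchoose (a+1) (b+1) := by
    have := gchoose_pascal (a+1) b
    rw [show a + 1 + 1 = a + 2 by ring] at this
    exact this
  have h2 : gchoose (a+1) b = gchoose a (b-1) + gchoose a b := by
    have := gchoose_pascal a (b-1)
    rw [show b - 1 + 1 = b by ring] at this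
    exact this
  rw [h1, h2, gchoose_pascal a b]; ring

lemma gchoose_symm (a : ℕ) :
    gchoose (2 * a + 1 : ℤ) ((a : ℤ) + 1) = gchoose (2 * a + 1 : ℤ) (a : ℤ) := by
  have h1 : ((2 * a + 1 : ℕ) : ℤ) = 2 * (a : ℤ) + 1 := by push_cast; ring
  rw [← h1, gchoose_natCast _ _ (by positivity), gchoose_natCast _ _ (by positivity)]
  have h2 : ((a : ℤ) + 1).toNat = a + 1 := by omega
  have h3 : ((a : ℤ)).toNat = a := by omega
  rw [h2, h3]
  norm_cast
  rw [← Nat.choose_symm (by omega : a + 1 ≤ 2 * a + 1)]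
  congr 1
  omega

lemma gchoose_diag (a : ℤ) : gchoose a 0 = 1 := by
  simp [gchoose, Ring.choose_zero_right]

noncomputable def tent (x : ℝ) (i j : ℕ) : ℝ :=
  (if i = j then x^2+2 else 0) + (if i = 0 ∧ j = 0 then 1 else 0)
  + (if i + 1 = j then 1 else 0) + (if i = j + 1 then 1 else 0)

noncomputable def Tmat (x : ℝ) (n : ℕ) : Matrix (Fin n) (Fin n) ℝ :=
  Matrix.of fun i j => tent x i j

noncomputable def Lmat (n : ℕ) : Matrix (Fin n) (Fin n) ℝ :=
  Matrix.of fun i j => (gchoose (2*(i:ℤ)+1) ((i:ℤ)-(j:ℤ)) : ℝ)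

lemma Lmat_det (n : ℕ) : (Lmat n).det = 1 := by
  have h : (Lmat n).BlockTriangular OrderDual.toDual := by
    intro i j hij
    have hij' : (i : ℕ) < (j : ℕ) := hij
    simp only [Lmat, Matrix.of_apply]
    rw [gchoose_neg (by omega)]
    norm_num
  rw [Matrix.det_of_lowerTriangular _ h]
  apply Finset.prod_eq_one
  intro i _
  simp only [Lmat, Matrix.of_apply, sub_self, gchoose_diag]
  norm_num

open Finset in
lemma sum_single_fin {n : ℕ} (f : Fin n → ℝ) (j : Fin n) :
    ∑ k : Fin n, f k * (if (k:ℕ) = (j:ℕ) then (1:ℝ) else 0) = f j := by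
  simp_rw [Fin.val_eq_val, mul_ite, mul_one, mul_zero]
  simp [Finset.sum_ite_eq']

lemma sum_ite_unique {n : ℕ} (f : Fin n → ℝ) (P : Fin n → Prop) [DecidablePred P] (c : ℝ)
    (j : Fin n) (hj : P j) (hu : ∀ k, P k → k = j) :
    ∑ k : Fin n, f k * (if P k then c else 0) = f j * c := by
  rw [Finset.sum_eq_single j]
  · rw [if_pos hj]
  · intro b _ hb
    rw [if_neg (fun h => hb (hu b h)), mul_zero]
  · intro h; exact absurd (Finset.mem_univ j) h

lemma sum_ite_none {n : ℕ} (f : Fin n → ℝ) (P : Fin n → Prop) [DecidablePred P] (c : ℝ)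
    (h : ∀ k, ¬ P k) :
    ∑ k : Fin n, f k * (if P k then c else 0) = 0 := by
  apply Finset.sum_eq_zero; intro k _; rw [if_neg (h k), mul_zero]

lemma factor (x : ℝ) (n : ℕ) :
    (Matrix.of fun i j : Fin n =>
        (gchoose (2 * (i : ℤ) + 1) ((i : ℤ) - (j : ℤ)) : ℝ) * x ^ 2 +
        (gchoose (2 * (i : ℤ) + 3) ((i : ℤ) + 1 - (j : ℤ)) : ℝ)) = Lmat n * Tmat x n := by
  ext i j
  rw [Matrix.mul_apply]
  simp only [Lmat, Tmat, tent, Matrix.of_apply]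
  simp_rw [mul_add, Finset.sum_add_distrib]
  have h1 : ∑ k : Fin n, (gchoose (2*(i:ℤ)+1) ((i:ℤ)-(k:ℤ)) : ℝ)
        * (if (k:ℕ) = (j:ℕ) then x^2+2 else 0)
      = (gchoose (2*(i:ℤ)+1) ((i:ℤ)-(j:ℤ)) : ℝ) * (x^2+2) :=
    sum_ite_unique _ _ _ j rfl (fun k hk => Fin.ext hk)
  have h2 : ∑ k : Fin n, (gchoose (2*(i:ℤ)+1) ((i:ℤ)-(k:ℤ)) : ℝ)
        * (if (k:ℕ) = 0 ∧ (j:ℕ) = 0 then (1:ℝ) else 0)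
      + ∑ k : Fin n, (gchoose (2*(i:ℤ)+1) ((i:ℤ)-(k:ℤ)) : ℝ)
        * (if (k:ℕ) + 1 = (j:ℕ) then (1:ℝ) else 0)
      = (gchoose (2*(i:ℤ)+1) ((i:ℤ)-(j:ℤ)+1) : ℝ) := by
    by_cases hj0 : (j:ℕ) = 0
    · rw [sum_ite_unique _ _ _ j ⟨hj0, hj0⟩ (fun k hk => Fin.ext (hk.1.trans hj0.symm)),
        sum_ite_none _ _ _ (fun k hk => by omega)]
      have hjz : ((j:ℕ):ℤ) = 0 := by omega
      have e1 : (i:ℤ) - (j:ℤ) + 1 = ((i:ℕ):ℤ) + 1 := by omega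
      have e2 : (i:ℤ) - (j:ℤ) = ((i:ℕ):ℤ) := by omega
      rw [mul_one, add_zero, e1, e2, gchoose_symm]
    · have hjlt : (j:ℕ) - 1 < n := by have := j.isLt; omega
      rw [sum_ite_none _ _ _ (fun k hk => hj0 hk.2),
        sum_ite_unique _ _ _ (⟨(j:ℕ)-1, hjlt⟩ : Fin n)
          (by simp only [Fin.val_mk]; omega) (fun k hk => Fin.ext (by simp only [Fin.val_mk]; omega))]
      rw [mul_one, zero_add]
      congr 1
      have : ((⟨(j:ℕ)-1, hjlt⟩ : Fin n) : ℤ) = (j:ℤ) - 1 := by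
        simp only [Fin.val_mk]
        omega
      rw [this]
      ring
  have h4 : ∑ k : Fin n, (gchoose (2*(i:ℤ)+1) ((i:ℤ)-(k:ℤ)) : ℝ)
        * (if (k:ℕ) = (j:ℕ) + 1 then (1:ℝ) else 0)
      = (gchoose (2*(i:ℤ)+1) ((i:ℤ)-(j:ℤ)-1) : ℝ) := by
    by_cases hjn : (j:ℕ) + 1 < n
    · rw [sum_ite_unique _ _ _ (⟨(j:ℕ)+1, hjn⟩ : Fin n) (by simp)
        (fun k hk => Fin.ext (by simpa using hk))]
      rw [mul_one]
      congr 1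
      have : ((⟨(j:ℕ)+1, hjn⟩ : Fin n) : ℤ) = (j:ℤ) + 1 := by
        simp only [Fin.val_mk]
        push_cast
        ring
      rw [this]
      ring
    · rw [sum_ite_none _ _ _ (fun k hk => by have := k.isLt; omega)]
      have hi := i.isLt
      have hj := j.isLt
      rw [gchoose_neg (by omega)]
      norm_num
  rw [show (i:ℤ)-(j:ℤ)+1 = (i:ℤ)+1-(j:ℤ) by ring] at h2
  have key := gchoose_double_pascal (2*(i:ℤ)+1) ((i:ℤ)-(j:ℤ))
  rw [show (2*(i:ℤ)+1+2) = 2*(i:ℤ)+3 by ring,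
    show (i:ℤ)-(j:ℤ)+1 = (i:ℤ)+1-(j:ℤ) by ring] at key
  have keyR := congrArg (Int.cast : ℤ → ℝ) key
  push_cast at keyR
  linear_combination (-1 : ℝ) * h1 - h2 - h4 + keyR

lemma val_succAbove {n : ℕ} (p : Fin (n+1)) (m : Fin n) :
    ((p.succAbove m : Fin (n+1)) : ℕ) = if (m:ℕ) < (p:ℕ) then (m:ℕ) else (m:ℕ)+1 := by
  rw [Fin.succAbove]
  split_ifs with h1 h2 h2 <;>
    simp_all [Fin.lt_def, Fin.coe_castSucc, Fin.val_succ] <;> omega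

lemma tent_eq_zero {x : ℝ} {a b : ℕ} (h1 : a ≠ b) (h2 : ¬(a = 0 ∧ b = 0))
    (h3 : a + 1 ≠ b) (h4 : a ≠ b + 1) : tent x a b = 0 := by
  simp [tent, h1, h2, h3, h4]

lemma Tmat_apply (x : ℝ) (n : ℕ) (i j : Fin n) : Tmat x n i j = tent x i j := rfl

lemma Tdet_rec (x : ℝ) (n : ℕ) :
    (Tmat x (n+2)).det = (x^2+2) * (Tmat x (n+1)).det - (Tmat x n).det := by
  rw [Matrix.det_succ_row _ (Fin.last (n+1))]
  set jp : Fin (n+2) := ⟨n, by omega⟩ with hjp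
  set jl : Fin (n+2) := Fin.last (n+1) with hjl
  set F : Fin (n+2) → ℝ := fun j => (-1) ^ ((Fin.last (n+1) : ℕ) + (j : ℕ)) *
      Tmat x (n+2) (Fin.last (n+1)) j *
      ((Tmat x (n+2)).submatrix (Fin.last (n+1)).succAbove j.succAbove).det with hF
  have hzero : ∀ j ∈ Finset.univ, j ∉ ({jp, jl} : Finset (Fin (n+2))) → F j = 0 := by
    intro j _ hj
    simp only [Finset.mem_insert, Finset.mem_singleton] at hj
    push_neg at hj
    have hv1 : (j : ℕ) ≠ n := fun h => hj.1 (Fin.ext h)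
    have hv2 : (j : ℕ) ≠ n + 1 := fun h => hj.2 (Fin.ext h)
    have : Tmat x (n+2) (Fin.last (n+1)) j = 0 := by
      rw [Tmat_apply]
      exact tent_eq_zero (by simp [Fin.last]; try omega) (by simp [Fin.last]; try omega)
        (by have := j.isLt; simp [Fin.last]; try omega) (by simp [Fin.last]; try omega)
    rw [hF]
    simp only [this, mul_zero, zero_mul]
  have hsum : ∑ j : Fin (n+2), F j = F jp + F jl := by
    rw [← Finset.sum_subset (Finset.subset_univ ({jp, jl} : Finset (Fin (n+2)))) hzero]
    exact Finset.sum_pair (by simp [hjp, hjl, Fin.ext_iff, Fin.last])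
  rw [hsum]
  -- compute F jl
  have hminor_l : (Tmat x (n+2)).submatrix (Fin.last (n+1)).succAbove jl.succAbove
      = Tmat x (n+1) := by
    ext a b
    rw [Matrix.submatrix_apply, hjl, Fin.succAbove_last, Tmat_apply, Tmat_apply]
    simp [Fin.coe_castSucc]
  have hFl : F jl = (x^2+2) * (Tmat x (n+1)).det := by
    rw [hF]
    simp only [hminor_l]
    have hent : Tmat x (n+2) (Fin.last (n+1)) jl = x^2+2 := by
      rw [Tmat_apply, hjl]
      simp [tent, Fin.last]
    rw [hent]
    have hsum' : (Fin.last (n+1)).val + jl.val = 2*n+2 := by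
      simp only [hjl, Fin.val_last]
      omega
    rw [hsum', Even.neg_one_pow ⟨n+1, by ring⟩, one_mul]
  -- compute F jp
  have hminor_p : ((Tmat x (n+2)).submatrix (Fin.last (n+1)).succAbove jp.succAbove).det
      = (Tmat x n).det := by
    set N := (Tmat x (n+2)).submatrix (Fin.last (n+1)).succAbove jp.succAbove with hN
    rw [Matrix.det_succ_column N (Fin.last n)]
    set G : Fin (n+1) → ℝ := fun i => (-1) ^ ((i : ℕ) + ((Fin.last n : Fin (n+1)) : ℕ)) *
        N i (Fin.last n) * (N.submatrix i.succAbove (Fin.last n).succAbove).det with hG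
    have hNval : ∀ (a b : Fin (n+1)), N a b = tent x
        (if (a:ℕ) < n+1 then (a:ℕ) else (a:ℕ)+1)
        (if (b:ℕ) < n then (b:ℕ) else (b:ℕ)+1) := by
      intro a b
      rw [hN, Matrix.submatrix_apply, Tmat_apply]
      congr 1
      · rw [val_succAbove]; simp [Fin.last]
      · rw [val_succAbove]; try simp only [hjp, Fin.val_mk]
    have hGzero : ∀ i ∈ Finset.univ, i ∉ ({Fin.last n} : Finset (Fin (n+1))) → G i = 0 := by
      intro i _ hi
      simp only [Finset.mem_singleton] at hi
      have hv : (i : ℕ) ≠ n := fun h => hi (Fin.ext (by simp only [Fin.val_last]; exact h))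
      have hilt := i.isLt
      have : N i (Fin.last n) = 0 := by
        rw [hNval]
        simp only [Fin.last]
        rw [if_pos (by try simp; try omega), if_neg (by simp)]
        exact tent_eq_zero (by try simp; try omega) (by try simp; try omega) (by try simp; try omega) (by try simp; try omega)
      rw [hG]; simp only [this, mul_zero, zero_mul]
    have hGsum : ∑ i : Fin (n+1), G i = G (Fin.last n) := by
      rw [← Finset.sum_subset (Finset.subset_univ _) hGzero, Finset.sum_singleton]
    rw [hGsum, hG]
    simp only
    have hent : N (Fin.last n) (Fin.last n) = 1 := by
      rw [hNval]
      simp only [Fin.last]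
      rw [if_pos (by simp), if_neg (by simp)]
      simp [tent]
      try omega
    have hsign : ((-1:ℝ)) ^ (((Fin.last n : Fin (n+1)) : ℕ) + ((Fin.last n : Fin (n+1)) : ℕ)) = 1 :=
      Even.neg_one_pow ⟨(Fin.last n).val, by ring⟩
    rw [hent, hsign]
    simp only [one_mul, mul_one]
    congr 1
    ext a b
    rw [Matrix.submatrix_apply, hNval, Tmat_apply]
    have h1 : ((((Fin.last n).succAbove a) : Fin (n+1)) : ℕ) = (a : ℕ) := by
      rw [val_succAbove]; simp [Fin.last, a.isLt]
    have h2 : ((((Fin.last n).succAbove b) : Fin (n+1)) : ℕ) = (b : ℕ) := by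
      rw [val_succAbove]; simp [Fin.last, b.isLt]
    rw [h1, h2, if_pos (by have := a.isLt; omega), if_pos (by have := b.isLt; omega)]
  have hFp : F jp = - (Tmat x n).det := by
    rw [hF]
    simp only [hminor_p]
    have hent : Tmat x (n+2) (Fin.last (n+1)) jp = 1 := by
      rw [Tmat_apply, hjp]
      simp [tent, Fin.last]
      omega
    rw [hent]
    have hsum' : (Fin.last (n+1)).val + jp.val = 2*n+1 := by
      simp only [hjp, Fin.val_last, Fin.val_mk]
      omega
    rw [hsum', Odd.neg_one_pow ⟨n, by ring⟩]
    ring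
  rw [hFl, hFp]
  ring

lemma fib_rec (m : ℕ) (x : ℝ) : fibP (m+2) x = x * fibP (m+1) x + fibP m x := by
  obtain ⟨t, rfl | rfl⟩ : ∃ t, m = 2*t ∨ m = 2*t+1 := by
    rcases Nat.even_or_odd m with ⟨t,h⟩|⟨t,h⟩
    exacts [⟨t, Or.inl (by omega)⟩, ⟨t, Or.inr (by omega)⟩]
  · -- even case
    have h1 : (2*t+2)/2 + 1 = t+2 := by omega
    have h2 : (2*t+1)/2 + 1 = t+1 := by omega
    have h3 : (2*t)/2 + 1 = t+1 := by omega
    simp only [fibP, h1, h2, h3]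
    rw [Finset.sum_range_succ' _ (t+1), Finset.mul_sum,
      Finset.sum_range_succ' (fun k => x * (((2*t+1-k).choose k : ℝ) * x ^ (2*t+1-2*k))) t]
    have hA : ∑ k ∈ Finset.range (t+1),
          (((2*t+2-(k+1)).choose (k+1) : ℝ) * x ^ (2*t+2-2*(k+1)))
        = (∑ k ∈ Finset.range (t+1), ((2*t-k).choose k : ℝ) * x ^ (2*t-2*k))
          + ∑ k ∈ Finset.range (t+1), ((2*t-k).choose (k+1) : ℝ) * x ^ (2*t-2*k) := by
      rw [← Finset.sum_add_distrib]
      apply Finset.sum_congr rfl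
      intro k hk
      rw [Finset.mem_range] at hk
      have e1 : 2*t+2-(k+1) = (2*t-k)+1 := by omega
      have e2 : 2*t+2-2*(k+1) = 2*t-2*k := by omega
      rw [e1, e2, Nat.choose_succ_succ]
      push_cast
      ring
    have hD : ∑ k ∈ Finset.range (t+1), ((2*t-k).choose (k+1) : ℝ) * x ^ (2*t-2*k)
        = ∑ k ∈ Finset.range t,
            x * (((2*t+1-(k+1)).choose (k+1) : ℝ) * x ^ (2*t+1-2*(k+1))) := by
      rw [Finset.sum_range_succ]
      have hz : ((2*t-t).choose (t+1) : ℝ) = 0 := by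
        rw [show 2*t-t = t by omega, Nat.choose_eq_zero_of_lt (by omega)]
        norm_num
      rw [hz, zero_mul, add_zero]
      apply Finset.sum_congr rfl
      intro k hk
      rw [Finset.mem_range] at hk
      have e1 : 2*t+1-(k+1) = 2*t-k := by omega
      have e2 : 2*t+1-2*(k+1) = 2*t-1-2*k := by omega
      have e3 : 2*t-2*k = (2*t-1-2*k)+1 := by omega
      rw [e1, e2, e3, pow_succ]
      ring
    rw [hA, hD]
    have hzero : (((2*t+2-0).choose 0 : ℝ) * x ^ (2*t+2-2*0))
        = x * (((2*t+1-0).choose 0 : ℝ) * x ^ (2*t+1-2*0)) := by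
      simp only [Nat.sub_zero, Nat.choose_zero_right, Nat.cast_one, one_mul, Nat.mul_zero]
      rw [show 2*t+2 = (2*t+1)+1 by omega, pow_succ]
      ring
    rw [hzero]
    ring
  · -- odd case
    have h1 : (2*t+3)/2 + 1 = t+2 := by omega
    have h2 : (2*t+2)/2 + 1 = t+2 := by omega
    have h3 : (2*t+1)/2 + 1 = t+1 := by omega
    rw [show 2*t+1+2 = 2*t+3 by omega, show 2*t+1+1 = 2*t+2 by omega]
    simp only [fibP, h1, h2, h3]
    rw [Finset.sum_range_succ' _ (t+1), Finset.mul_sum,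
      Finset.sum_range_succ' (fun k => x * (((2*t+2-k).choose k : ℝ) * x ^ (2*t+2-2*k))) (t+1)]
    have hA : ∑ k ∈ Finset.range (t+1),
          (((2*t+3-(k+1)).choose (k+1) : ℝ) * x ^ (2*t+3-2*(k+1)))
        = (∑ k ∈ Finset.range (t+1), ((2*t+1-k).choose k : ℝ) * x ^ (2*t+1-2*k))
          + ∑ k ∈ Finset.range (t+1), ((2*t+1-k).choose (k+1) : ℝ) * x ^ (2*t+1-2*k) := by
      rw [← Finset.sum_add_distrib]
      apply Finset.sum_congr rfl
      intro k hk
      rw [Finset.mem_range] at hk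
      have e1 : 2*t+3-(k+1) = (2*t+1-k)+1 := by omega
      have e2 : 2*t+3-2*(k+1) = 2*t+1-2*k := by omega
      rw [e1, e2, Nat.choose_succ_succ]
      push_cast
      ring
    have hD : ∑ k ∈ Finset.range (t+1), ((2*t+1-k).choose (k+1) : ℝ) * x ^ (2*t+1-2*k)
        = ∑ k ∈ Finset.range (t+1),
            x * (((2*t+2-(k+1)).choose (k+1) : ℝ) * x ^ (2*t+2-2*(k+1))) := by
      apply Finset.sum_congr rfl
      intro k hk
      rw [Finset.mem_range] at hk
      have e1 : 2*t+2-(k+1) = 2*t+1-k := by omega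
      have e2 : 2*t+2-2*(k+1) = 2*t-2*k := by omega
      have e3 : 2*t+1-2*k = (2*t-2*k)+1 := by omega
      rw [e1, e2, e3, pow_succ]
      ring
    rw [hA, hD]
    have hzero : (((2*t+3-0).choose 0 : ℝ) * x ^ (2*t+3-2*0))
        = x * (((2*t+2-0).choose 0 : ℝ) * x ^ (2*t+2-2*0)) := by
      simp only [Nat.sub_zero, Nat.choose_zero_right, Nat.cast_one, one_mul, Nat.mul_zero]
      rw [show 2*t+3 = (2*t+2)+1 by omega, pow_succ]
      ring
    rw [hzero]
    ring

lemma lucas_odd (n : ℕ) (hn : 1 ≤ n) (x : ℝ) :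
    lucasP (2*n+1) x = fibP (2*n+1) x + fibP (2*n-1) x := by
  have hm : (2*n+1) ≠ 0 := by omega
  rw [lucasP, if_neg hm]
  have h1 : (2*n+1)/2 + 1 = n+1 := by omega
  have h2 : (2*n-1)/2 + 1 = n := by omega
  simp only [fibP, h1, h2]
  rw [Finset.sum_range_succ' _ n,
    Finset.sum_range_succ' (fun k => (((2*n+1-k).choose k : ℝ)) * x ^ (2*n+1-2*k)) n]
  have hz : ((2*n+1:ℕ) : ℝ) / (((2*n+1-0:ℕ)) : ℝ) * (((2*n+1-0).choose 0 : ℝ)) * x ^ (2*n+1-2*0)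
      = (((2*n+1-0).choose 0 : ℝ)) * x ^ (2*n+1-2*0) := by
    rw [Nat.sub_zero, div_self (by positivity), one_mul]
  rw [hz]
  have hmain : ∑ k ∈ Finset.range n,
        ((2*n+1:ℕ) : ℝ) / (((2*n+1-(k+1):ℕ)) : ℝ) * (((2*n+1-(k+1)).choose (k+1) : ℝ))
          * x ^ (2*n+1-2*(k+1))
      = ∑ k ∈ Finset.range n, ((((2*n+1-(k+1)).choose (k+1) : ℝ)) * x ^ (2*n+1-2*(k+1))
          + (((2*n-1-k).choose k : ℝ)) * x ^ (2*n-1-2*k)) := by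
    apply Finset.sum_congr rfl
    intro k hk
    rw [Finset.mem_range] at hk
    have e1 : 2*n+1-(k+1) = 2*n-k := by omega
    have e2 : 2*n+1-2*(k+1) = 2*n-1-2*k := by omega
    rw [e1, e2]
    have hp : 1 ≤ 2*n-k := by omega
    -- Nat identity: (2*n-k) * (2*n-k-1).choose k = (2*n-k).choose (k+1) * (k+1)
    have hnat : (2*n-k) * (2*n-k-1).choose k = (2*n-k).choose (k+1) * (k+1) := by
      have := Nat.add_one_mul_choose_eq (2*n-k-1) k
      rw [show 2*n-k-1+1 = 2*n-k by omega] at this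
      simpa [Nat.succ_eq_add_one] using this
    have hR : ((2*n-k : ℕ) : ℝ) * ((2*n-k-1).choose k : ℝ)
        = ((2*n-k).choose (k+1) : ℝ) * ((k:ℝ)+1) := by
      exact_mod_cast congrArg (Nat.cast : ℕ → ℝ) hnat
    have hne : ((2*n-k : ℕ) : ℝ) ≠ 0 := by
      have : (0:ℕ) < 2*n-k := by omega
      positivity
    have e3 : 2*n-1-k = 2*n-k-1 := by omega
    rw [e3]
    have hsum : ((2*n+1:ℕ) : ℝ) = ((2*n-k : ℕ) : ℝ) + (k:ℝ) + 1 := by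
      have hk2 : k ≤ 2*n := by omega
      push_cast [hk2]
      ring
    have hcoef : ((2*n+1:ℕ) : ℝ) / ((2*n-k : ℕ) : ℝ) * ((2*n-k).choose (k+1) : ℝ)
        = ((2*n-k).choose (k+1) : ℝ) + ((2*n-k-1).choose k : ℝ) := by
      rw [div_mul_eq_mul_div, div_eq_iff hne]
      linear_combination (((2*n-k).choose (k+1) : ℝ)) * hsum - hR
    rw [← add_mul, ← hcoef]
  rw [hmain, Finset.sum_add_distrib]
  ring


lemma Tdet_one (x : ℝ) : (Tmat x 1).det = x^2+3 := by
  rw [Matrix.det_fin_one]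
  show tent x 0 0 = x^2+3
  simp [tent]
  ring

lemma Tdet_two (x : ℝ) : (Tmat x 2).det = (x^2+3)*(x^2+2) - 1 := by
  rw [Matrix.det_fin_two]
  show tent x 0 0 * tent x 1 1 - tent x 0 1 * tent x 1 0 = _
  have h00 : tent x 0 0 = x^2+3 := by simp [tent]; ring
  have h01 : tent x 0 1 = 1 := by simp [tent]
  have h10 : tent x 1 0 = 1 := by simp [tent]
  have h11 : tent x 1 1 = x^2+2 := by simp [tent]
  rw [h00, h01, h10, h11]
  ring

lemma fibP_one (x : ℝ) : fibP 1 x = x := by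
  simp [fibP]

lemma fibP_three (x : ℝ) : fibP 3 x = x^3 + 2*x := by
  rw [fibP, show (3:ℕ)/2+1 = 2 from rfl, Finset.sum_range_succ, Finset.sum_range_one]
  norm_num

lemma fibP_five (x : ℝ) : fibP 5 x = x^5 + 4*x^3 + 3*x := by
  rw [fibP, show (5:ℕ)/2+1 = 3 from rfl, Finset.sum_range_succ, Finset.sum_range_succ,
    Finset.sum_range_one]
  norm_num [Nat.choose]

lemma main_aux (x : ℝ) : ∀ n : ℕ, x * (Tmat x (n+1)).det = fibP (2*n+3) x + fibP (2*n+1) x := by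
  intro n
  induction n using Nat.twoStepInduction with
  | zero =>
    rw [show (0:ℕ)+1 = 1 from rfl, Tdet_one, fibP_three, fibP_one]
    ring
  | one =>
    rw [show (1:ℕ)+1 = 2 from rfl, Tdet_two, fibP_five, fibP_three]
    ring
  | more n ih1 ih2 =>
    have e1 : fibP (2*n+3) x = x * fibP (2*n+2) x + fibP (2*n+1) x := by
      have h := fib_rec (2*n+1) x
      rw [show 2*n+1+2 = 2*n+3 by omega, show 2*n+1+1 = 2*n+2 by omega] at h
      exact h
    have e2 : fibP (2*n+4) x = x * fibP (2*n+3) x + fibP (2*n+2) x := by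
      have h := fib_rec (2*n+2) x
      rw [show 2*n+2+2 = 2*n+4 by omega, show 2*n+2+1 = 2*n+3 by omega] at h
      exact h
    have e3 : fibP (2*n+5) x = x * fibP (2*n+4) x + fibP (2*n+3) x := by
      have h := fib_rec (2*n+3) x
      rw [show 2*n+3+2 = 2*n+5 by omega, show 2*n+3+1 = 2*n+4 by omega] at h
      exact h
    have e4 : fibP (2*n+6) x = x * fibP (2*n+5) x + fibP (2*n+4) x := by
      have h := fib_rec (2*n+4) x
      rw [show 2*n+4+2 = 2*n+6 by omega, show 2*n+4+1 = 2*n+5 by omega] at h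
      exact h
    have e5 : fibP (2*n+7) x = x * fibP (2*n+6) x + fibP (2*n+5) x := by
      have h := fib_rec (2*n+5) x
      rw [show 2*n+5+2 = 2*n+7 by omega, show 2*n+5+1 = 2*n+6 by omega] at h
      exact h
    have h5 : fibP (2*n+5) x = (x^2+2) * fibP (2*n+3) x - fibP (2*n+1) x := by
      linear_combination e3 + x*e2 - e1
    have h7 : fibP (2*n+7) x = (x^2+2) * fibP (2*n+5) x - fibP (2*n+3) x := by
      linear_combination e5 + x*e4 - e3
    rw [show n+2+1 = n+1+2 by omega, Tdet_rec x (n+1),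
      show 2*(n+2)+3 = 2*n+7 by omega, show 2*(n+2)+1 = 2*n+5 by omega]
    rw [show n+1+1 = n+2 by omega] at ih2
    rw [show 2*(n+1)+3 = 2*n+5 by omega, show 2*(n+1)+1 = 2*n+3 by omega] at ih2
    linear_combination (x^2+2) * ih2 - ih1 - h7 - h5

theorem det_eq_lucas_odd (n : ℕ) (hn : 1 ≤ n) (x : ℝ) :
    x * Matrix.det (Matrix.of fun i j : Fin n =>
        (gchoose (2 * (i : ℤ) + 1) ((i : ℤ) - (j : ℤ)) : ℝ) * x ^ 2 +
        (gchoose (2 * (i : ℤ) + 3) ((i : ℤ) + 1 - (j : ℤ)) : ℝ)) = lucasP (2 * n + 1) x := by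
  obtain ⟨m, rfl⟩ : ∃ m, n = m+1 := ⟨n-1, by omega⟩
  rw [factor x (m+1), Matrix.det_mul, Lmat_det, one_mul]
  rw [lucas_odd (m+1) (by omega) x]
  rw [show 2*(m+1)+1 = 2*m+3 by omega, show 2*(m+1)-1 = 2*m+1 by omega]
  exact main_aux x m
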